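/- arXiv:2109.10564 — 3 statements merged into one kernel-verified Lean document; each statement's English description precedes it below -/
import Mathlib

section
/- For every k ∈ ℕ and every t ∈ ℝ, the partial sum σ_k(t) = ∑_{j=1}^k sin(jt)/j is bounded by a constant C independent of k and t. -/
open Finset Real

/-- Dirichlet-type kernel bound. -/
lemma dirichlet_bound (t : ℝ) (hs : Real.sin (t / 2) ≠ 0) (n : ℕ) :
    |∑ i ∈ Finset.range n, Real.sin (i * t)| ≤ 1 / |Real.sin (t / 2)| := by
  have hsp : 0 < |Real.sin (t / 2)| := abs_pos.mpr hs
  rw [le_div_iff₀ hsp]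
  set c : ℕ → ℝ := fun i => Real.cos ((i : ℝ) * t - t / 2) with hc
  have key : ∀ i : ℕ, c i - c (i + 1) = 2 * Real.sin ((i : ℝ) * t) * Real.sin (t / 2) := by
    intro i
    have h1 : ((i + 1 : ℕ) : ℝ) * t - t / 2 = (i : ℝ) * t + t / 2 := by push_cast; ring
    simp only [hc, h1]
    rw [Real.cos_sub_cos,
      show ((i : ℝ) * t - t / 2 + ((i : ℝ) * t + t / 2)) / 2 = (i : ℝ) * t by ring,
      show ((i : ℝ) * t - t / 2 - ((i : ℝ) * t + t / 2)) / 2 = -(t / 2) by ring,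
      Real.sin_neg]
    ring
  have tel : (∑ i ∈ Finset.range n, Real.sin ((i : ℝ) * t)) * (2 * Real.sin (t / 2))
      = c 0 - c n := by
    rw [← Finset.sum_range_sub' c n]
    rw [Finset.sum_mul]
    exact Finset.sum_congr rfl fun i _ => by rw [key i]; ring
  have habs : |(∑ i ∈ Finset.range n, Real.sin ((i : ℝ) * t))| * (2 * |Real.sin (t / 2)|) ≤ 2 := by
    have : |(∑ i ∈ Finset.range n, Real.sin ((i : ℝ) * t)) * (2 * Real.sin (t / 2))| ≤ 2 := by
      rw [tel]
      have h0 : |c 0| ≤ 1 := Real.abs_cos_le_one _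
      have h1 : |c n| ≤ 1 := Real.abs_cos_le_one _
      calc |c 0 - c n| ≤ |c 0| + |c n| := abs_sub _ _
        _ ≤ 2 := by linarith
    calc |(∑ i ∈ Finset.range n, Real.sin ((i : ℝ) * t))| * (2 * |Real.sin (t / 2)|)
        = |(∑ i ∈ Finset.range n, Real.sin ((i : ℝ) * t)) * (2 * Real.sin (t / 2))| := by
          rw [abs_mul, abs_mul]; norm_num
      _ ≤ 2 := this
  linarith

/-- `|sin (n x)| ≤ n |sin x|`. -/
lemma abs_sin_nat_mul_le (x : ℝ) : ∀ n : ℕ, |Real.sin ((n : ℝ) * x)| ≤ (n : ℝ) * |Real.sin x| := by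
  intro n
  induction n with
  | zero => simp
  | succ n ih =>
    have h1 : ((n + 1 : ℕ) : ℝ) * x = (n : ℝ) * x + x := by push_cast; ring
    rw [h1, Real.sin_add]
    calc |Real.sin ((n:ℝ)*x) * Real.cos x + Real.cos ((n:ℝ)*x) * Real.sin x|
        ≤ |Real.sin ((n:ℝ)*x) * Real.cos x| + |Real.cos ((n:ℝ)*x) * Real.sin x| := abs_add_le _ _
      _ ≤ (n : ℝ) * |Real.sin x| + 1 * |Real.sin x| := by
          rw [abs_mul, abs_mul]
          have h1 := Real.abs_cos_le_one x
          have h2 := Real.abs_cos_le_one ((n:ℝ)*x)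
          have h3 := abs_nonneg (Real.sin ((n:ℝ)*x))
          have h4 := abs_nonneg (Real.sin x)
          nlinarith
      _ = ((n + 1 : ℕ) : ℝ) * |Real.sin x| := by push_cast; ring

/-- The partial sums `σ_k(t) = ∑_{j=1}^k sin(jt)/j` are uniformly bounded in `k` and `t`. -/
theorem uniform_bound_sigma :
    ∃ C : ℝ, 0 < C ∧ ∀ (k : ℕ) (t : ℝ),
      |∑ j ∈ Finset.Icc 1 k, Real.sin (j * t) / j| ≤ C := by
  refine ⟨10, by norm_num, fun k t => ?_⟩
  by_cases hs : Real.sin (t / 2) = 0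
  · -- t is a multiple of 2π; all terms vanish
    obtain ⟨m, hm⟩ := Real.sin_eq_zero_iff.mp hs
    have hz : ∀ j ∈ Finset.Icc 1 k, Real.sin ((j : ℝ) * t) / (j : ℝ) = 0 := by
      intro j _
      have : Real.sin ((j : ℝ) * t) = 0 := by
        apply Real.sin_eq_zero_iff.mpr
        exact ⟨2 * j * m, by push_cast; linear_combination (2 * (j : ℝ)) * hm⟩
      rw [this, zero_div]
    rw [Finset.sum_congr rfl hz]
    simp
  · set s := |Real.sin (t / 2)| with hsdef
    have hs0 : 0 < s := abs_pos.mpr hs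
    have hs1 : s ≤ 1 := abs_le.mpr ⟨Real.neg_one_le_sin _, Real.sin_le_one _⟩
    have hsint : |Real.sin t| ≤ 2 * s := by
      have ht : Real.sin t = 2 * Real.sin (t / 2) * Real.cos (t / 2) := by
        rw [← Real.sin_two_mul]; ring_nf
      rw [ht]
      calc |2 * Real.sin (t / 2) * Real.cos (t / 2)|
          = 2 * s * |Real.cos (t / 2)| := by rw [abs_mul, abs_mul, abs_two, hsdef]
        _ ≤ 2 * s * 1 := by gcongr; exact Real.abs_cos_le_one _
        _ = 2 * s := by ring
    have small : ∀ j : ℕ, 1 ≤ j → |Real.sin ((j : ℝ) * t) / (j : ℝ)| ≤ 2 * s := by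
      intro j hj
      have hj0 : (0 : ℝ) < j := by exact_mod_cast hj
      rw [abs_div, abs_of_pos hj0, div_le_iff₀ hj0]
      calc |Real.sin ((j : ℝ) * t)| ≤ (j : ℝ) * |Real.sin t| := abs_sin_nat_mul_le t j
        _ ≤ (j : ℝ) * (2 * s) := by gcongr
        _ = 2 * s * j := by ring
    set N : ℕ := ⌈1 / s⌉₊ with hNdef
    have hN1 : 1 ≤ N := Nat.one_le_iff_ne_zero.mpr (by
      simp only [hNdef, ne_eq, Nat.ceil_eq_zero, not_le]
      positivity)
    have hNs : 1 ≤ (N : ℝ) * s := by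
      have h := Nat.le_ceil (1 / s)
      have : 1 / s ≤ (N : ℝ) := h
      calc (1 : ℝ) = (1 / s) * s := by field_simp
        _ ≤ (N : ℝ) * s := by gcongr
    have hNs2 : (N : ℝ) * s ≤ 2 := by
      have h := Nat.ceil_lt_add_one (by positivity : (0:ℝ) ≤ 1 / s)
      have hN : (N : ℝ) ≤ 1 / s + 1 := h.le
      calc (N : ℝ) * s ≤ (1 / s + 1) * s := by gcongr
        _ = 1 + s := by field_simp
        _ ≤ 2 := by linarith
    -- head bound
    have head : ∀ m : ℕ, m ≤ N → |∑ j ∈ Finset.Icc 1 m, Real.sin ((j:ℝ) * t) / (j:ℝ)| ≤ 4 := by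
      intro m hm
      calc |∑ j ∈ Finset.Icc 1 m, Real.sin ((j:ℝ) * t) / (j:ℝ)|
          ≤ ∑ j ∈ Finset.Icc 1 m, |Real.sin ((j:ℝ) * t) / (j:ℝ)| := Finset.abs_sum_le_sum_abs _ _
        _ ≤ ∑ j ∈ Finset.Icc 1 m, 2 * s := by
            apply Finset.sum_le_sum
            intro j hj
            exact small j (Finset.mem_Icc.mp hj).1
        _ = (m : ℝ) * (2 * s) := by
            rw [Finset.sum_const, Nat.card_Icc]
            simp [nsmul_eq_mul]
        _ ≤ (N : ℝ) * (2 * s) := by gcongr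
        _ = 2 * ((N:ℝ) * s) := by ring
        _ ≤ 4 := by linarith
    have hIoc : ∀ n : ℕ, Finset.Icc 1 n = Finset.Ioc 0 n := fun n => Finset.Icc_add_one_left_eq_Ioc 0 n
    by_cases hk : k ≤ N
    · exact le_trans (head k hk) (by norm_num)
    · push_neg at hk
      -- split the sum
      have hsplit : ∑ j ∈ Finset.Icc 1 k, Real.sin ((j:ℝ) * t) / (j:ℝ)
          = (∑ j ∈ Finset.Icc 1 N, Real.sin ((j:ℝ) * t) / (j:ℝ))
            + ∑ j ∈ Finset.Ioc N k, Real.sin ((j:ℝ) * t) / (j:ℝ) := by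
        rw [hIoc k, hIoc N]
        exact (Finset.sum_Ioc_consecutive _ (Nat.zero_le N) hk.le).symm
      rw [hsplit]
      -- Abel summation on the tail
      set f : ℕ → ℝ := fun i => ((i : ℝ))⁻¹ with hf
      set g : ℕ → ℝ := fun i => Real.sin ((i : ℝ) * t) with hg
      have habel := Finset.sum_Ioc_by_parts f g hk
      have htail_eq : ∑ j ∈ Finset.Ioc N k, Real.sin ((j:ℝ) * t) / (j:ℝ)
          = ∑ j ∈ Finset.Ioc N k, f j • g j := by
        apply Finset.sum_congr rfl
        intro j _
        simp [hf, hg, smul_eq_mul, div_eq_inv_mul, mul_comm]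
      have Gb : ∀ m : ℕ, |∑ i ∈ Finset.range m, g i| ≤ 1 / s := fun m => dirichlet_bound t hs m
      have fb : ∀ j : ℕ, N ≤ j → f j ≤ s := by
        intro j hj
        have hj1 : 1 ≤ j := le_trans hN1 hj
        have hj0 : (0 : ℝ) < j := by exact_mod_cast hj1
        have hjs : 1 ≤ (j : ℝ) * s := le_trans hNs (by gcongr)
        simp only [hf]
        rw [inv_eq_one_div, div_le_iff₀ hj0]
        linarith [mul_comm (j : ℝ) s]
      have fnn : ∀ j : ℕ, 0 ≤ f j := fun j => by simp only [hf]; positivity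
      have fmono : ∀ j : ℕ, 1 ≤ j → f (j + 1) ≤ f j := by
        intro j h
        have h0 : (0:ℝ) < j := by exact_mod_cast h
        simp only [hf]
        apply inv_anti₀ h0
        push_cast; linarith
      have htel : ∑ i ∈ Finset.Ioc N (k - 1), (f i - f (i + 1)) = f (N + 1) - f k := by
        have hIoc' : Finset.Ioc N (k - 1) = Finset.Ico (N + 1) k := by
          ext a
          simp only [Finset.mem_Ioc, Finset.mem_Ico]
          omega
        rw [hIoc', Finset.sum_Ico_eq_sum_range]
        have := Finset.sum_range_sub' (fun j => f (N + 1 + j)) (k - (N + 1))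
        rw [show (∑ i ∈ Finset.range (k - (N+1)), (f (N + 1 + i) - f (N + 1 + i + 1)))
            = f (N + 1 + 0) - f (N + 1 + (k - (N + 1))) from this]
        rw [Nat.add_zero, Nat.add_sub_cancel' hk]
      have hsum3 : |∑ i ∈ Finset.Ioc N (k - 1), (f (i + 1) - f i) • (∑ j ∈ Finset.range (i+1), g j)| ≤ 1 := by
        calc |∑ i ∈ Finset.Ioc N (k - 1), (f (i + 1) - f i) • (∑ j ∈ Finset.range (i+1), g j)|
            ≤ ∑ i ∈ Finset.Ioc N (k - 1), |(f (i + 1) - f i) • (∑ j ∈ Finset.range (i+1), g j)| :=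
              Finset.abs_sum_le_sum_abs _ _
          _ ≤ ∑ i ∈ Finset.Ioc N (k - 1), (f i - f (i + 1)) * (1 / s) := by
              apply Finset.sum_le_sum
              intro i hi
              have hi1 : 1 ≤ i := le_trans hN1 (Finset.mem_Ioc.mp hi).1.le
              have hm := fmono i hi1
              rw [smul_eq_mul, abs_mul, abs_of_nonpos (by linarith), neg_sub]
              exact mul_le_mul_of_nonneg_left (Gb (i + 1)) (by linarith)
          _ = (f (N + 1) - f k) * (1 / s) := by rw [← Finset.sum_mul, htel]
          _ ≤ s * (1 / s) := by
              apply mul_le_mul_of_nonneg_right _ (by positivity)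
              have := fb (N + 1) (Nat.le_succ N)
              linarith [fnn k]
          _ = 1 := by field_simp
      have hterm1 : |f k • (∑ j ∈ Finset.range (k+1), g j)| ≤ 1 := by
        rw [smul_eq_mul, abs_mul, abs_of_nonneg (fnn k)]
        calc f k * |∑ j ∈ Finset.range (k+1), g j| ≤ s * (1 / s) :=
              mul_le_mul (fb k hk.le) (Gb (k+1)) (abs_nonneg _) hs0.le
          _ = 1 := by field_simp
      have hterm2 : |f (N+1) • (∑ j ∈ Finset.range (N+1), g j)| ≤ 1 := by
        rw [smul_eq_mul, abs_mul, abs_of_nonneg (fnn (N+1))]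
        calc f (N+1) * |∑ j ∈ Finset.range (N+1), g j| ≤ s * (1 / s) :=
              mul_le_mul (fb (N+1) (Nat.le_succ N)) (Gb (N+1)) (abs_nonneg _) hs0.le
          _ = 1 := by field_simp
      have htail : |∑ j ∈ Finset.Ioc N k, Real.sin ((j:ℝ) * t) / (j:ℝ)| ≤ 3 := by
        rw [htail_eq, habel]
        have h12 : |f k • (∑ j ∈ Finset.range (k+1), g j)
            - f (N+1) • (∑ j ∈ Finset.range (N+1), g j)| ≤ 2 :=
          le_trans (abs_sub _ _) (by linarith [hterm1, hterm2])
        calc |f k • (∑ j ∈ Finset.range (k+1), g j)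
            - f (N+1) • (∑ j ∈ Finset.range (N+1), g j)
            - ∑ i ∈ Finset.Ioc N (k-1), (f (i+1) - f i) • (∑ j ∈ Finset.range (i+1), g j)|
            ≤ |f k • (∑ j ∈ Finset.range (k+1), g j)
              - f (N+1) • (∑ j ∈ Finset.range (N+1), g j)|
              + |∑ i ∈ Finset.Ioc N (k-1), (f (i+1) - f i) • (∑ j ∈ Finset.range (i+1), g j)| :=
              abs_sub _ _
          _ ≤ 3 := by linarith [hsum3]
      calc |(∑ j ∈ Finset.Icc 1 N, Real.sin ((j:ℝ) * t) / (j:ℝ))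
            + ∑ j ∈ Finset.Ioc N k, Real.sin ((j:ℝ) * t) / (j:ℝ)|
          ≤ |∑ j ∈ Finset.Icc 1 N, Real.sin ((j:ℝ) * t) / (j:ℝ)|
            + |∑ j ∈ Finset.Ioc N k, Real.sin ((j:ℝ) * t) / (j:ℝ)| := abs_add_le _ _
        _ ≤ 10 := by linarith [head N le_rfl, htail]
end

section
/- If z ∈ ℂ satisfies dist(z, 2ℕ₀ + d) ≥ c for a constant 0 < c < 1, then for every integer m ≥ 2 the sum ∑_{k=0}^∞ |2k + d − z|^{−m} is bounded by C_m (1 + |Im z|)^{1−m}, with C_m depending only on m, d, c. -/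
lemma tele_aux (b : ℝ) (hb : 1 ≤ b) (N : ℕ) :
    ∑ j ∈ Finset.range N, ((b + j + 1)⁻¹) ^ 2 ≤ b⁻¹ - (b + N)⁻¹ := by
  induction N with
  | zero => simp
  | succ N ih =>
    rw [Finset.sum_range_succ]
    have h1 : (0:ℝ) < b + N := by positivity
    have h2 : (0:ℝ) < b + N + 1 := by positivity
    have key : ((b + N + 1)⁻¹) ^ 2 ≤ (b + N)⁻¹ - (b + N + 1)⁻¹ := by
      have e : (b + N)⁻¹ - (b + N + 1)⁻¹ = ((b + N) * (b + N + 1))⁻¹ := by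
        field_simp
        ring
      rw [e, inv_pow]
      apply inv_anti₀ (by positivity)
      nlinarith
    have e2 : b + ((N:ℝ) + 1) = b + (N:ℝ) + 1 := by ring
    push_cast
    rw [e2]
    linarith

lemma summable_aux (b : ℝ) (hb : 1 ≤ b) (m : ℕ) (hm : 2 ≤ m) :
    Summable (fun j : ℕ => ((b + j)⁻¹) ^ m) := by
  have h2 : Summable (fun j : ℕ => (((j:ℝ) + 1)⁻¹) ^ 2) := by
    have h := Real.summable_one_div_nat_pow.mpr (le_refl 2)
    have h' := (summable_nat_add_iff 1).mpr h
    apply h'.congr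
    intro j
    push_cast
    rw [one_div, inv_pow]
  apply Summable.of_nonneg_of_le (fun j => by positivity) _ h2
  intro j
  have hbj : (1:ℝ) ≤ b + j := by
    have : (0:ℝ) ≤ j := Nat.cast_nonneg j
    linarith
  have h1 : ((j:ℝ) + 1) ≤ b + j := by linarith
  calc ((b + j)⁻¹) ^ m ≤ ((b + j)⁻¹) ^ 2 :=
        pow_le_pow_of_le_one (by positivity) (inv_le_one_of_one_le₀ hbj) hm
    _ ≤ (((j:ℝ) + 1)⁻¹) ^ 2 :=
        pow_le_pow_left₀ (by positivity) (inv_anti₀ (by positivity) h1) 2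

lemma tsum_aux (b : ℝ) (hb : 1 ≤ b) (m : ℕ) (hm : 2 ≤ m) :
    ∑' j : ℕ, ((b + j)⁻¹) ^ m ≤ 2 * (b ^ (m - 1))⁻¹ := by
  have hb0 : (0:ℝ) < b := lt_of_lt_of_le one_pos hb
  have hs := summable_aux b hb m hm
  rw [Summable.tsum_eq_zero_add hs]
  have h0 : ((b + ((0:ℕ):ℝ))⁻¹) ^ m ≤ (b ^ (m - 1))⁻¹ := by
    rw [Nat.cast_zero, add_zero, inv_pow]
    exact inv_anti₀ (by positivity) (pow_le_pow_right₀ hb (by omega))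
  have htail : ∑' j : ℕ, ((b + ((j:ℕ) + 1 : ℕ))⁻¹) ^ m ≤ (b ^ (m - 1))⁻¹ := by
    have hs' : Summable fun j : ℕ => ((b + ((j + 1 : ℕ) : ℝ))⁻¹) ^ m :=
      (summable_nat_add_iff 1).mpr hs
    have hsq : Summable fun j : ℕ => (b ^ (m - 2))⁻¹ * ((b + (j:ℝ) + 1)⁻¹) ^ 2 := by
      apply Summable.mul_left
      have := (summable_nat_add_iff 1).mpr (summable_aux b hb 2 le_rfl)
      apply this.congr
      intro j
      push_cast
      ring_nf
    have key : ∀ j : ℕ, ((b + ((j + 1 : ℕ) : ℝ))⁻¹) ^ m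
        ≤ (b ^ (m - 2))⁻¹ * ((b + (j:ℝ) + 1)⁻¹) ^ 2 := by
      intro j
      have hj0 : (0:ℝ) ≤ (j:ℝ) := Nat.cast_nonneg j
      have hx : (0:ℝ) < b + (j:ℝ) + 1 := by positivity
      have e : ((j + 1 : ℕ) : ℝ) = (j:ℝ) + 1 := by push_cast; ring
      rw [e, ← add_assoc]
      have em : ((b + (j:ℝ) + 1)⁻¹) ^ m
          = ((b + (j:ℝ) + 1)⁻¹) ^ (m - 2) * ((b + (j:ℝ) + 1)⁻¹) ^ 2 := by
        rw [← pow_add]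
        congr 1
        omega
      rw [em]
      apply mul_le_mul_of_nonneg_right _ (by positivity)
      calc ((b + (j:ℝ) + 1)⁻¹) ^ (m - 2) ≤ (b⁻¹) ^ (m - 2) :=
            pow_le_pow_left₀ (by positivity)
              (inv_anti₀ hb0 (by linarith)) (m - 2)
        _ = (b ^ (m - 2))⁻¹ := by rw [inv_pow]
    calc ∑' j : ℕ, ((b + ((j + 1 : ℕ) : ℝ))⁻¹) ^ m
        ≤ ∑' j : ℕ, (b ^ (m - 2))⁻¹ * ((b + (j:ℝ) + 1)⁻¹) ^ 2 :=
          Summable.tsum_le_tsum key hs' hsq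
      _ = (b ^ (m - 2))⁻¹ * ∑' j : ℕ, ((b + (j:ℝ) + 1)⁻¹) ^ 2 := tsum_mul_left
      _ ≤ (b ^ (m - 2))⁻¹ * b⁻¹ := by
          apply mul_le_mul_of_nonneg_left _ (by positivity)
          apply Real.tsum_le_of_sum_range_le (fun n => by positivity)
          intro n
          have h2 : (0:ℝ) < b + n := by positivity
          have h3 : (0:ℝ) ≤ (b + (n:ℝ))⁻¹ := by positivity
          linarith [tele_aux b hb n]
      _ = (b ^ (m - 1))⁻¹ := by
          have e : m - 2 + 1 = m - 1 := by omega
          rw [← mul_inv, ← pow_succ, e]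
  linarith

set_option maxHeartbeats 1000000 in
/-- If `dist(z, 2ℕ₀ + d) ≥ c` with `0 < c < 1`, then for every `m ≥ 2`,
`∑_{k=0}^∞ |2k + d − z|^{−m} ≤ C_m (1 + |Im z|)^{1−m}` with `C_m` depending only on
`m`, `d` and `c`. -/
theorem resolvent_sum_bound (d : ℕ) (hd : 1 ≤ d) (c : ℝ) (hc : 0 < c) (hc1 : c < 1)
    (m : ℕ) (hm : 2 ≤ m) :
    ∃ C : ℝ, 0 < C ∧ ∀ z : ℂ,
      (∀ k : ℕ, c ≤ ‖z - (2 * k + d)‖) →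
      ∑' k : ℕ, ‖(2 * k + d : ℂ) - z‖⁻¹ ^ m
        ≤ C * (1 + |z.im|) ^ ((1 : ℤ) - m) := by
  refine ⟨4 * (4 / c) ^ m, by positivity, fun z hz => ?_⟩
  set b : ℝ := 1 + |z.im| with hbdef
  have hb : 1 ≤ b := by rw [hbdef]; linarith [abs_nonneg z.im]
  have hb0 : (0:ℝ) < b := lt_of_lt_of_le one_pos hb
  set t : ℝ := (z.re - d) / 2 with htdef
  set n : ℤ := round t with hndef
  obtain ⟨h, hhdef⟩ : ∃ h : ℕ → ℝ, h = fun j : ℕ => ((b + (j:ℝ))⁻¹) ^ m := ⟨_, rfl⟩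
  have hpos : ∀ j : ℕ, 0 ≤ h j := fun j => by rw [hhdef]; positivity
  have hmono : ∀ k : ℕ, h (k + 1) ≤ h k := by
    intro k
    rw [hhdef]
    have hk0 : (0:ℝ) ≤ (k:ℝ) := Nat.cast_nonneg k
    apply pow_le_pow_left₀ (by positivity)
    apply inv_anti₀ (by positivity)
    push_cast
    linarith
  -- pointwise bound
  have key : ∀ k : ℕ, ‖(2 * k + d : ℂ) - z‖⁻¹ ^ m
      ≤ (4 / c) ^ m * h ((k:ℤ) - n).natAbs := by
    intro k
    set w : ℂ := (2 * k + d : ℂ) - z with hwdef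
    set j : ℕ := ((k:ℤ) - n).natAbs with hjdef
    have hre : w.re = 2 * k + d - z.re := by simp [hwdef]
    have him : w.im = -z.im := by simp [hwdef]
    have h1 : |2 * (k:ℝ) + d - z.re| ≤ ‖w‖ := by
      have := Complex.abs_re_le_norm w
      rwa [hre] at this
    have h2 : |z.im| ≤ ‖w‖ := by
      have := Complex.abs_im_le_norm w
      rwa [him, abs_neg] at this
    have h3 : c ≤ ‖w‖ := by
      have := hz k
      rwa [norm_sub_rev z] at this
    set s : ℝ := |2 * (k:ℝ) + d - z.re| with hsdef
    have hs0 : 0 ≤ s := abs_nonneg _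
    -- s ≥ 2*j - 1
    have hjs : 2 * (j:ℝ) - 1 ≤ s := by
      have e1 : 2 * (k:ℝ) + d - z.re = 2 * ((k:ℝ) - t) := by
        rw [htdef]; ring
      have e2 : s = 2 * |(k:ℝ) - t| := by
        rw [hsdef, e1, abs_mul, abs_two]
      have e3 : ((j:ℕ):ℝ) = |(k:ℝ) - (n:ℝ)| := by
        rw [hjdef]
        rw [Nat.cast_natAbs]
        push_cast
        ring_nf
      have e4 : |t - (n:ℝ)| ≤ 1 / 2 := abs_sub_round t
      have e5 : |(k:ℝ) - (n:ℝ)| ≤ |(k:ℝ) - t| + |t - (n:ℝ)| := abs_sub_le _ _ _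
      rw [e2]
      rw [e3] at *
      linarith
    have hjb : b + (j:ℝ) ≤ b + s := by
      rcases Nat.eq_zero_or_pos j with h0 | h0
      · simp [h0]; linarith
      · have : (1:ℝ) ≤ (j:ℝ) := by exact_mod_cast h0
        linarith
    -- c * (b + j) ≤ 4 * abs w
    have habs0 : 0 ≤ ‖w‖ := norm_nonneg _
    have hcy : c * |z.im| ≤ |z.im| :=
      mul_le_of_le_one_left (abs_nonneg _) hc1.le
    have hcs : c * s ≤ s := mul_le_of_le_one_left hs0 hc1.le
    have hA : c / 4 * (b + (j:ℝ)) ≤ ‖w‖ := by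
      have hcb : c * (b + s) ≤ 4 * ‖w‖ := by
        have : c * (b + s) = c + c * |z.im| + c * s := by rw [hbdef]; ring
        rw [this]
        linarith
      have := mul_le_mul_of_nonneg_left hjb hc.le
      linarith
    have hjpos : (0:ℝ) < b + (j:ℝ) := by positivity
    have hApos : (0:ℝ) < ‖w‖ := lt_of_lt_of_le hc h3
    have hinv : ‖w‖⁻¹ ≤ 4 / c * (b + (j:ℝ))⁻¹ := by
      have e : 4 / c * (b + (j:ℝ))⁻¹ = (c / 4 * (b + (j:ℝ)))⁻¹ := by
        rw [mul_inv]
        congr 1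
        rw [inv_div]
      rw [e]
      exact inv_anti₀ (by positivity) hA
    calc ‖w‖⁻¹ ^ m ≤ (4 / c * (b + (j:ℝ))⁻¹) ^ m :=
          pow_le_pow_left₀ (by positivity) hinv m
      _ = (4 / c) ^ m * h j := by rw [mul_pow, hhdef]
  -- summability facts
  have hsum_h : Summable h := hhdef ▸ summable_aux b hb m hm
  have htsum_h : ∑' k : ℕ, h k ≤ 2 * (b ^ (m - 1))⁻¹ := by
    rw [hhdef]; exact tsum_aux b hb m hm
  have hHZ : Summable (fun i : ℤ => h i.natAbs) := by
    apply Summable.of_nat_of_neg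
    · exact hsum_h.congr (fun k => by simp)
    · exact hsum_h.congr (fun k => by simp)

  have hGZ : Summable (fun i : ℤ => h (i - n).natAbs) :=
    ((Equiv.subRight n).summable_iff (f := fun i : ℤ => h i.natAbs)).mpr hHZ
  have hGN : Summable (fun k : ℕ => h ((k:ℤ) - n).natAbs) :=
    hGZ.comp_injective (Nat.cast_injective : Function.Injective ((↑) : ℕ → ℤ))
  have hLHS : Summable (fun k : ℕ => ‖(2 * k + d : ℂ) - z‖⁻¹ ^ m) :=
    Summable.of_nonneg_of_le (fun k => by positivity) key (hGN.mul_left _)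
  -- chain of bounds
  have step1 : ∑' k : ℕ, ‖(2 * k + d : ℂ) - z‖⁻¹ ^ m
      ≤ (4 / c) ^ m * ∑' k : ℕ, h ((k:ℤ) - n).natAbs := by
    rw [← tsum_mul_left]
    exact Summable.tsum_le_tsum key hLHS (hGN.mul_left _)
  have step2 : ∑' k : ℕ, h ((k:ℤ) - n).natAbs ≤ ∑' i : ℤ, h (i - n).natAbs := by
    apply Summable.tsum_le_tsum_of_inj (fun k : ℕ => (k:ℤ)) (Nat.cast_injective : Function.Injective ((↑) : ℕ → ℤ))
      (fun i _ => hpos _) (fun k => le_rfl) hGN hGZ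
  have step3 : ∑' i : ℤ, h (i - n).natAbs = ∑' i : ℤ, h i.natAbs :=
    (Equiv.subRight n).tsum_eq (fun i : ℤ => h i.natAbs)
  have step4 : ∑' i : ℤ, h i.natAbs ≤ 4 * (b ^ (m - 1))⁻¹ := by
    have hA1 : Summable (fun k : ℕ => h ((k:ℤ)).natAbs) :=
      hsum_h.congr (fun k => by simp)
    have hA2 : Summable (fun k : ℕ => h ((-((k:ℤ) + 1)).natAbs)) :=
      ((summable_nat_add_iff 1).mpr hsum_h).congr (fun k => by rw [show ((-((k:ℤ) + 1)).natAbs) = k + 1 by omega])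
    rw [tsum_of_nat_of_neg_add_one (f := fun i : ℤ => h i.natAbs) hA1 hA2]
    have t1 : ∑' k : ℕ, h ((k:ℤ)).natAbs ≤ 2 * (b ^ (m - 1))⁻¹ := by
      calc ∑' k : ℕ, h ((k:ℤ)).natAbs = ∑' k : ℕ, h k := tsum_congr (fun k => by simp)
        _ ≤ 2 * (b ^ (m - 1))⁻¹ := htsum_h
    have t2 : ∑' k : ℕ, h ((-((k:ℤ) + 1)).natAbs) ≤ 2 * (b ^ (m - 1))⁻¹ := by
      have he : ∀ k : ℕ, h ((-((k:ℤ) + 1)).natAbs) = h (k + 1) := fun k => by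
        rw [show ((-((k:ℤ) + 1)).natAbs) = k + 1 by omega]
      calc ∑' k : ℕ, h ((-((k:ℤ) + 1)).natAbs) = ∑' k : ℕ, h (k + 1) :=
            tsum_congr he
        _ ≤ ∑' k : ℕ, h k :=
            Summable.tsum_le_tsum hmono ((summable_nat_add_iff 1).mpr hsum_h) hsum_h
        _ ≤ 2 * (b ^ (m - 1))⁻¹ := htsum_h
    linarith
  -- finish
  have hzpow : (1 + |z.im|) ^ ((1 : ℤ) - m) = (b ^ (m - 1))⁻¹ := by
    have e : (1 : ℤ) - m = -(((m - 1 : ℕ) : ℤ)) := by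
      push_cast [Nat.cast_sub (by omega : 1 ≤ m)]
      ring
    rw [← hbdef, e, zpow_neg, zpow_natCast]
  rw [hzpow]
  calc ∑' k : ℕ, ‖(2 * k + d : ℂ) - z‖⁻¹ ^ m
      ≤ (4 / c) ^ m * ∑' k : ℕ, h ((k:ℤ) - n).natAbs := step1
    _ ≤ (4 / c) ^ m * (4 * (b ^ (m - 1))⁻¹) := by
        apply mul_le_mul_of_nonneg_left _ (by positivity)
        calc ∑' k : ℕ, h ((k:ℤ) - n).natAbs ≤ ∑' i : ℤ, h (i - n).natAbs := step2
          _ = ∑' i : ℤ, h i.natAbs := step3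
          _ ≤ 4 * (b ^ (m - 1))⁻¹ := step4
    _ = 4 * (4 / c) ^ m * (b ^ (m - 1))⁻¹ := by ring
end

section
/- Let μ ∈ (−1/2, 1/2) and τ ∈ ℝ with μ² + τ² ≥ c² for some c > 0. Define G(t) = 1/(iτ + t + μ). Then there is B > 0 depending only on c such that: |G(n)| ≤ B for all n ∈ ℤ; ∑_{k=1}^∞ |G(k) + G(−k)| ≤ B; and ∑_{k=1}^∞ |k G(k) − (k+1) G(k+1)| ≤ B. -/
open Real Finset

lemma normd (τ x μ : ℝ) : ‖(Complex.I * τ + x + μ : ℂ)‖ = Real.sqrt ((x + μ) ^ 2 + τ ^ 2) := by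
  rw [show (Complex.I * τ + x + μ : ℂ) = ((x + μ : ℝ) : ℂ) + (τ : ℂ) * Complex.I by
    push_cast; ring]
  rw [Complex.norm_add_mul_I]

lemma arctan_step {t : ℝ} (ht : 0 < t) (k : ℕ) :
    t / (((k : ℝ) + 1) ^ 2 + t ^ 2) ≤ Real.arctan (((k : ℝ) + 1) / t) - Real.arctan ((k : ℝ) / t) := by
  set a : ℝ := (k : ℝ) / t with ha
  set b : ℝ := ((k : ℝ) + 1) / t with hb
  have hab : a < b := by rw [ha, hb]; gcongr; linarith
  obtain ⟨ξ, hξ, hd⟩ := exists_hasDerivAt_eq_slope Real.arctan (fun x => 1 / (1 + x ^ 2)) hab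
    (Real.continuous_arctan.continuousOn) (fun x _ => Real.hasDerivAt_arctan x)
  have h1 : Real.arctan b - Real.arctan a = (b - a) * (1 / (1 + ξ ^ 2)) := by
    rw [hd, mul_div_cancel₀]
    exact sub_ne_zero.mpr hab.ne'
  have hξ0 : 0 ≤ ξ := le_trans (by positivity) hξ.1.le
  have hξb : ξ ≤ b := hξ.2.le
  have h2 : 1 / (1 + b ^ 2) ≤ 1 / (1 + ξ ^ 2) := by
    apply one_div_le_one_div_of_le (by positivity)
    nlinarith
  have h3 : (b - a) * (1 / (1 + b ^ 2)) ≤ (b - a) * (1 / (1 + ξ ^ 2)) := by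
    apply mul_le_mul_of_nonneg_left h2 (by linarith)
  have h4 : (b - a) * (1 / (1 + b ^ 2)) = t / (((k : ℝ) + 1) ^ 2 + t ^ 2) := by
    rw [ha, hb]
    have h5 : ((k : ℝ) + 1) ^ 2 + t ^ 2 > 0 := by positivity
    field_simp
    ring
  linarith [h1 ▸ h3, h4 ▸ h3]

lemma sum_inv_sq_le (n : ℕ) : ∑ k ∈ range n, (1 : ℝ) / ((k : ℝ) + 1) ^ 2 ≤ 2 := by
  have h1 : ∀ k ∈ range n, (1 : ℝ) / ((k : ℝ) + 1) ^ 2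
      ≤ 2 * ((fun k : ℕ => 1 / ((k : ℝ) + 1)) k - (fun k : ℕ => 1 / ((k : ℝ) + 1)) (k + 1)) := by
    intro k _
    have hk1 : ((k : ℝ) + 1) ≠ 0 := by positivity
    have hk2 : ((k : ℝ) + 1 + 1) ≠ 0 := by positivity
    have : (1 : ℝ) / ((k : ℝ) + 1) - 1 / ((k : ℝ) + 1 + 1) = 1 / (((k : ℝ) + 1) * ((k : ℝ) + 1 + 1)) := by
      rw [div_sub_div _ _ hk1 hk2]
      congr 1
      ring
    push_cast
    rw [this, mul_one_div, div_le_div_iff₀ (by positivity) (by positivity)]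
    nlinarith [sq_nonneg ((k : ℝ) + 1)]
  calc ∑ k ∈ range n, (1 : ℝ) / ((k : ℝ) + 1) ^ 2
      ≤ ∑ k ∈ range n, 2 * ((fun k : ℕ => 1 / ((k : ℝ) + 1)) k - (fun k : ℕ => 1 / ((k : ℝ) + 1)) (k + 1)) :=
        Finset.sum_le_sum h1
    _ = 2 * ((fun k : ℕ => 1 / ((k : ℝ) + 1)) 0 - (fun k : ℕ => 1 / ((k : ℝ) + 1)) n) := by
        rw [← Finset.mul_sum, Finset.sum_range_sub']
    _ ≤ 2 := by
        have h0 : (0 : ℝ) ≤ 1 / ((n : ℝ) + 1) := by positivity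
        show 2 * (1 / ((0 : ℕ) + 1 : ℝ) - 1 / ((n : ℝ) + 1)) ≤ 2
        norm_num
        positivity

lemma sum_tau_le (τ : ℝ) (n : ℕ) :
    ∑ k ∈ range n, |τ| / (((k : ℝ) + 1) ^ 2 + τ ^ 2) ≤ 2 := by
  rcases eq_or_ne τ 0 with h | h
  · simp [h]
  · have ht : 0 < |τ| := abs_pos.mpr h
    have hτ2 : τ ^ 2 = |τ| ^ 2 := (sq_abs τ).symm
    calc ∑ k ∈ range n, |τ| / (((k : ℝ) + 1) ^ 2 + τ ^ 2)
        ≤ ∑ k ∈ range n, ((fun k : ℕ => Real.arctan ((k : ℝ) / |τ|)) (k + 1)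
            - (fun k : ℕ => Real.arctan ((k : ℝ) / |τ|)) k) := by
          apply Finset.sum_le_sum
          intro k _
          have := arctan_step ht k
          rw [hτ2]
          push_cast
          convert this using 2
      _ = (fun k : ℕ => Real.arctan ((k : ℝ) / |τ|)) n
            - (fun k : ℕ => Real.arctan ((k : ℝ) / |τ|)) 0 :=
          Finset.sum_range_sub (fun k : ℕ => Real.arctan ((k : ℝ) / |τ|)) n
      _ ≤ 2 := by
          show Real.arctan ((n : ℝ) / |τ|) - Real.arctan (((0 : ℕ) : ℝ) / |τ|) ≤ 2
          rw [Nat.cast_zero, zero_div, Real.arctan_zero, sub_zero]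
          have := Real.arctan_lt_pi_div_two ((n : ℝ) / |τ|)
          have := Real.pi_le_four
          linarith

lemma sqrt_div_two_le {μ τ x : ℝ} (q : ℝ) (hq : 0 ≤ q) (h : q / 4 ≤ (x + μ) ^ 2 + τ ^ 2) :
    Real.sqrt q / 2 ≤ ‖(Complex.I * τ + x + μ : ℂ)‖ := by
  rw [normd]
  apply (Real.le_sqrt (by positivity) (by positivity)).mpr
  rw [div_pow, Real.sq_sqrt hq]
  norm_num
  linarith

lemma center_ub {μ τ : ℝ} (hμ1 : -(1/2) < μ) (hμ2 : μ < 1/2) :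
    ‖(Complex.I * τ + ((0 : ℝ) : ℂ) + μ : ℂ)‖ ≤ 1/2 + |τ| := by
  rw [normd]
  have h1 : ((0 : ℝ) + μ) ^ 2 + τ ^ 2 ≤ (1/2 + |τ|) ^ 2 := by
    nlinarith [sq_abs τ, abs_nonneg τ]
  calc Real.sqrt (((0 : ℝ) + μ) ^ 2 + τ ^ 2) ≤ Real.sqrt ((1/2 + |τ|) ^ 2) :=
        Real.sqrt_le_sqrt h1
    _ = 1/2 + |τ| := Real.sqrt_sq (by positivity)

set_option maxHeartbeats 2000000 in
/-- For `G(t) = 1/(iτ + t + μ)` with `μ ∈ (−1/2, 1/2)`, `τ ∈ ℝ` and `μ² + τ² ≥ c²`,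
there is `B > 0` depending only on `c` such that `|G(n)| ≤ B` for all `n ∈ ℤ`,
`∑_{k≥1} |G(k) + G(−k)| ≤ B`, and `∑_{k≥1} |k G(k) − (k+1) G(k+1)| ≤ B`. -/
theorem G_mu_tau_bounds (c : ℝ) (hc : 0 < c) :
    ∃ B : ℝ, 0 < B ∧ ∀ (μ τ : ℝ), -(1/2) < μ → μ < 1/2 → c ^ 2 ≤ μ ^ 2 + τ ^ 2 →
      ∀ G : ℝ → ℂ, (∀ t : ℝ, G t = (Complex.I * τ + t + μ)⁻¹) →
      ((∀ n : ℤ, ‖G n‖ ≤ B) ∧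
       (Summable (fun k : ℕ => ‖G (k + 1) + G (-(k + 1 : ℕ) : ℤ)‖) ∧
         ∑' k : ℕ, ‖G (k + 1) + G (-(k + 1 : ℕ) : ℤ)‖ ≤ B) ∧
       (Summable (fun k : ℕ => ‖((k : ℂ) + 1) * G (k + 1) - ((k : ℂ) + 2) * G (k + 2)‖) ∧
         ∑' k : ℕ, ‖((k : ℂ) + 1) * G (k + 1) - ((k : ℂ) + 2) * G (k + 2)‖ ≤ B)) := by
  refine ⟨c⁻¹ + 24, by positivity, ?_⟩
  intro μ τ hμ1 hμ2 hcμτ G hG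
  have hμa : |μ| < 1/2 := abs_lt.mpr ⟨by linarith, hμ2⟩
  have hcinv : (0 : ℝ) < c⁻¹ := by positivity
  -- the dominating function
  set h : ℕ → ℝ := fun k => 4 * (1 / ((k : ℝ) + 1) ^ 2) + 8 * (|τ| / (((k : ℝ) + 1) ^ 2 + τ ^ 2))
    with hh
  have hsum24 : ∀ n : ℕ, ∑ k ∈ range n, h k ≤ 24 := by
    intro n
    rw [hh]
    rw [Finset.sum_add_distrib, ← Finset.mul_sum, ← Finset.mul_sum]
    have h1 := sum_inv_sq_le n
    have h2 := sum_tau_le τ n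
    nlinarith
  -- per-term bounds
  have hterm2 : ∀ k : ℕ, ‖G (k + 1) + G (-(k + 1 : ℕ) : ℤ)‖ ≤ h k := by
    intro k
    rw [hG, hG]
    have harg : (((-(k + 1 : ℕ) : ℤ)) : ℝ) = -((k : ℝ) + 1) := by push_cast; ring
    rw [harg]
    set x : ℝ := (k : ℝ) + 1 with hx
    have hx1 : (1 : ℝ) ≤ x := by
      rw [hx]; have : (0:ℝ) ≤ (k:ℝ) := Nat.cast_nonneg k; linarith
    set q : ℝ := x ^ 2 + τ ^ 2 with hq
    have hq0 : (0 : ℝ) < q := by positivity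
    have hq1 : (1 : ℝ) ≤ q := by nlinarith [sq_nonneg τ]
    have hsq : (0 : ℝ) < Real.sqrt q := Real.sqrt_pos.mpr hq0
    have hna : Real.sqrt q / 2 ≤ ‖(Complex.I * τ + (x : ℂ) + μ : ℂ)‖ := by
      apply sqrt_div_two_le q hq0.le
      have h1 : x / 2 ≤ x + μ := by linarith
      nlinarith [sq_nonneg τ]
    have hnb : Real.sqrt q / 2 ≤ ‖(Complex.I * τ + ((-x : ℝ) : ℂ) + μ : ℂ)‖ := by
      apply sqrt_div_two_le q hq0.le
      have h1 : -x + μ ≤ -(x / 2) := by linarith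
      nlinarith [sq_nonneg τ]
    have ha0 : (Complex.I * τ + (x : ℂ) + μ : ℂ) ≠ 0 := by
      rw [← norm_pos_iff]; linarith [hna, hsq]
    have hb0 : (Complex.I * τ + ((-x : ℝ) : ℂ) + μ : ℂ) ≠ 0 := by
      rw [← norm_pos_iff]; linarith [hnb, hsq]
    have halg : (Complex.I * τ + (x : ℂ) + μ)⁻¹ + (Complex.I * τ + ((-x : ℝ) : ℂ) + μ)⁻¹
        = ((Complex.I * τ + (x : ℂ) + μ) + (Complex.I * τ + ((-x : ℝ) : ℂ) + μ))
          * ((Complex.I * τ + (x : ℂ) + μ)⁻¹ * (Complex.I * τ + ((-x : ℝ) : ℂ) + μ)⁻¹) := by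
      set a : ℂ := Complex.I * τ + (x : ℂ) + μ
      set b : ℂ := Complex.I * τ + ((-x : ℝ) : ℂ) + μ
      rw [add_mul, show a * (a⁻¹ * b⁻¹) = (a * a⁻¹) * b⁻¹ by ring,
        show b * (a⁻¹ * b⁻¹) = (b * b⁻¹) * a⁻¹ by ring,
        mul_inv_cancel₀ ha0, mul_inv_cancel₀ hb0, one_mul, one_mul, add_comm]
    rw [halg, norm_mul, norm_mul, norm_inv, norm_inv]
    have hnum : ‖((Complex.I * τ + (x : ℂ) + μ) + (Complex.I * τ + ((-x : ℝ) : ℂ) + μ) : ℂ)‖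
        ≤ 2 * (1/2 + |τ|) := by
      have he : ((Complex.I * τ + (x : ℂ) + μ) + (Complex.I * τ + ((-x : ℝ) : ℂ) + μ) : ℂ)
          = 2 * (Complex.I * τ + ((0 : ℝ) : ℂ) + μ) := by push_cast; ring
      rw [he, norm_mul]
      have h2 : ‖(2 : ℂ)‖ = 2 := by norm_num
      rw [h2]
      linarith [center_ub (τ := τ) hμ1 hμ2]
    have hA : ‖(Complex.I * τ + (x : ℂ) + μ : ℂ)‖⁻¹ ≤ 2 / Real.sqrt q := by
      have := inv_anti₀ (by positivity) hna
      rwa [inv_div] at this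
    have hB : ‖(Complex.I * τ + ((-x : ℝ) : ℂ) + μ : ℂ)‖⁻¹ ≤ 2 / Real.sqrt q := by
      have := inv_anti₀ (by positivity) hnb
      rwa [inv_div] at this
    calc ‖((Complex.I * τ + (x : ℂ) + μ) + (Complex.I * τ + ((-x : ℝ) : ℂ) + μ) : ℂ)‖
          * (‖(Complex.I * τ + (x : ℂ) + μ : ℂ)‖⁻¹ * ‖(Complex.I * τ + ((-x : ℝ) : ℂ) + μ : ℂ)‖⁻¹)
        ≤ (2 * (1/2 + |τ|)) * ((2 / Real.sqrt q) * (2 / Real.sqrt q)) := by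
          gcongr
      _ = (1 + 2 * |τ|) * (4 / q) := by
          rw [div_mul_div_comm, Real.mul_self_sqrt hq0.le]
          ring
      _ = 4 / q + 8 * (|τ| / q) := by ring
      _ ≤ h k := by
          have hhk : h k = 4 * (1 / x ^ 2) + 8 * (|τ| / q) := by rw [hh]
          rw [hhk]
          have hx2 : x ^ 2 ≤ q := by nlinarith [sq_nonneg τ]
          have h4 : 4 / q ≤ 4 / x ^ 2 := by gcongr <;> positivity
          have h5 : 4 * (1 / x ^ 2) = 4 / x ^ 2 := by ring
          linarith
  have hterm3 : ∀ k : ℕ, ‖((k : ℂ) + 1) * G (k + 1) - ((k : ℂ) + 2) * G (k + 2)‖ ≤ h k := by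
    intro k
    rw [hG, hG]
    set x : ℝ := (k : ℝ) + 1 with hx
    have hx1 : (1 : ℝ) ≤ x := by
      rw [hx]; have : (0:ℝ) ≤ (k:ℝ) := Nat.cast_nonneg k; linarith
    set q : ℝ := x ^ 2 + τ ^ 2 with hq
    have hq0 : (0 : ℝ) < q := by positivity
    have hsq : (0 : ℝ) < Real.sqrt q := Real.sqrt_pos.mpr hq0
    have hna : Real.sqrt q / 2 ≤ ‖(Complex.I * τ + (((k : ℝ) + 1 : ℝ) : ℂ) + μ : ℂ)‖ := by
      apply sqrt_div_two_le q hq0.le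
      have h1 : x / 2 ≤ ((k : ℝ) + 1) + μ := by linarith [hx.le, hx.ge]
      nlinarith [sq_nonneg τ]
    have hnb : Real.sqrt q / 2 ≤ ‖(Complex.I * τ + (((k : ℝ) + 2 : ℝ) : ℂ) + μ : ℂ)‖ := by
      apply sqrt_div_two_le q hq0.le
      have h1 : x / 2 ≤ ((k : ℝ) + 2) + μ := by linarith [hx.le, hx.ge]
      nlinarith [sq_nonneg τ]
    have ha0 : (Complex.I * τ + (((k : ℝ) + 1 : ℝ) : ℂ) + μ : ℂ) ≠ 0 := by
      rw [← norm_pos_iff]; linarith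
    have hb0 : (Complex.I * τ + (((k : ℝ) + 2 : ℝ) : ℂ) + μ : ℂ) ≠ 0 := by
      rw [← norm_pos_iff]; linarith
    set a : ℂ := Complex.I * τ + (((k : ℝ) + 1 : ℝ) : ℂ) + μ with hadef
    set b : ℂ := Complex.I * τ + (((k : ℝ) + 2 : ℝ) : ℂ) + μ with hbdef
    have halg : ((k : ℂ) + 1) * a⁻¹ - ((k : ℂ) + 2) * b⁻¹
        = (((k : ℂ) + 1) * b - ((k : ℂ) + 2) * a) * (a⁻¹ * b⁻¹) := by
      rw [sub_mul, show ((k : ℂ) + 1) * b * (a⁻¹ * b⁻¹) = ((k : ℂ) + 1) * (b * b⁻¹) * a⁻¹ by ring,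
        show ((k : ℂ) + 2) * a * (a⁻¹ * b⁻¹) = ((k : ℂ) + 2) * (a * a⁻¹) * b⁻¹ by ring,
        mul_inv_cancel₀ hb0, mul_inv_cancel₀ ha0, mul_one, mul_one]
    rw [halg, norm_mul, norm_mul, norm_inv, norm_inv]
    have hnum : ‖(((k : ℂ) + 1) * b - ((k : ℂ) + 2) * a : ℂ)‖ ≤ 2 * (1/2 + |τ|) := by
      have he : (((k : ℂ) + 1) * b - ((k : ℂ) + 2) * a : ℂ)
          = -(Complex.I * τ + ((0 : ℝ) : ℂ) + μ) := by
        rw [hadef, hbdef]; push_cast; ring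
      rw [he, norm_neg]
      have h0 : (0:ℝ) ≤ 1/2 + |τ| := by positivity
      linarith [center_ub (τ := τ) hμ1 hμ2]
    have hA : ‖a‖⁻¹ ≤ 2 / Real.sqrt q := by
      have := inv_anti₀ (by positivity) hna
      rwa [inv_div] at this
    have hB : ‖b‖⁻¹ ≤ 2 / Real.sqrt q := by
      have := inv_anti₀ (by positivity) hnb
      rwa [inv_div] at this
    calc ‖(((k : ℂ) + 1) * b - ((k : ℂ) + 2) * a : ℂ)‖ * (‖a‖⁻¹ * ‖b‖⁻¹)
        ≤ (2 * (1/2 + |τ|)) * ((2 / Real.sqrt q) * (2 / Real.sqrt q)) := by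
          gcongr
      _ = (1 + 2 * |τ|) * (4 / q) := by
          rw [div_mul_div_comm, Real.mul_self_sqrt hq0.le]
          ring
      _ = 4 / q + 8 * (|τ| / q) := by ring
      _ ≤ h k := by
          have hhk : h k = 4 * (1 / x ^ 2) + 8 * (|τ| / q) := by rw [hh]
          rw [hhk]
          have hx2 : x ^ 2 ≤ q := by nlinarith [sq_nonneg τ]
          have h4 : 4 / q ≤ 4 / x ^ 2 := by gcongr
          have h5 : 4 * (1 / x ^ 2) = 4 / x ^ 2 := by ring
          linarith
  have hpartial2 : ∀ n : ℕ, ∑ k ∈ range n, ‖G (k + 1) + G (-(k + 1 : ℕ) : ℤ)‖ ≤ 24 :=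
    fun n => le_trans (Finset.sum_le_sum fun k _ => hterm2 k) (hsum24 n)
  have hpartial3 : ∀ n : ℕ,
      ∑ k ∈ range n, ‖((k : ℂ) + 1) * G (k + 1) - ((k : ℂ) + 2) * G (k + 2)‖ ≤ 24 :=
    fun n => le_trans (Finset.sum_le_sum fun k _ => hterm3 k) (hsum24 n)
  refine ⟨?_, ⟨summable_of_sum_range_le (fun k => norm_nonneg _) hpartial2,
      (Real.tsum_le_of_sum_range_le (fun k => norm_nonneg _) hpartial2).trans (by linarith)⟩,
    ⟨summable_of_sum_range_le (fun k => norm_nonneg _) hpartial3,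
      (Real.tsum_le_of_sum_range_le (fun k => norm_nonneg _) hpartial3).trans (by linarith)⟩⟩
  intro n
  rw [hG, norm_inv, normd]
  rcases eq_or_ne n 0 with rfl | hn
  · have h1 : c ≤ Real.sqrt ((((0 : ℤ) : ℝ) + μ) ^ 2 + τ ^ 2) := by
      rw [show c = Real.sqrt (c ^ 2) from (Real.sqrt_sq hc.le).symm]
      apply Real.sqrt_le_sqrt
      push_cast
      nlinarith
    have := inv_anti₀ hc h1
    linarith
  · have hn1 : (1 : ℝ) ≤ |(n : ℝ)| := by exact_mod_cast Int.one_le_abs hn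
    have htri : |(n : ℝ)| ≤ |(n : ℝ) + μ| + |μ| := by
      calc |(n : ℝ)| = |((n : ℝ) + μ) - μ| := by ring_nf
        _ ≤ |(n : ℝ) + μ| + |μ| := abs_sub _ _
    have h2 : (1/2 : ℝ) ≤ Real.sqrt (((n : ℝ) + μ) ^ 2 + τ ^ 2) := by
      rw [show (1/2 : ℝ) = Real.sqrt ((1/2) ^ 2) by rw [Real.sqrt_sq]; norm_num]
      apply Real.sqrt_le_sqrt
      nlinarith [sq_abs ((n : ℝ) + μ), sq_nonneg τ, abs_nonneg ((n : ℝ) + μ)]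
    have := inv_anti₀ (by norm_num) h2
    have h3 : ((1:ℝ)/2)⁻¹ = 2 := by norm_num
    rw [h3] at this
    linarith
end
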